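/- E_φ is multiplicatively closed: for all x, y ∈ E_φ, the product x·y in ℤ[E×] lies in E_φ ∪ {0}. -/

import Mathlib

set_option linter.unusedSectionVars false

/-- A *semilattice with zero*: a commutative idempotent semigroup with an
absorbing element `0`. -/
class SemilatticeWithZero (E : Type) extends CommSemigroup E, Zero E where
  mul_idem : ∀ e : E, e * e = e
  zero_mul : ∀ e : E, 0 * e = 0

namespace IndRes

variable {E : Type} [SemilatticeWithZero E]

/-- `single e c`, viewed in the semigroup algebra `ℤ[E]`. -/
noncomputable def sgl (e : E) (c : ℤ) : MonoidAlgebra ℤ E := MonoidAlgebra.single e c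

/-- Truncation map deleting the coefficient at `0`. -/
noncomputable def T (x : MonoidAlgebra ℤ E) : MonoidAlgebra ℤ E := x - sgl 0 (x.coeff 0)

lemma sgl_apply_self (e : E) (c : ℤ) : (sgl e c).coeff e = c := by
  simp [sgl, MonoidAlgebra.coeff_single]

lemma sgl_apply_ne (e d : E) (c : ℤ) (h : e ≠ d) : (sgl e c).coeff d = 0 := by
  simp [sgl, MonoidAlgebra.coeff_single, Finsupp.single_apply, h]

lemma sgl_add (e : E) (c d : ℤ) : sgl e (c + d) = sgl e c + sgl e d := MonoidAlgebra.single_add e c d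

lemma sgl_sub (e : E) (c d : ℤ) : sgl e (c - d) = sgl e c - sgl e d := MonoidAlgebra.single_sub e c d

lemma T_apply_zero (x : MonoidAlgebra ℤ E) : (T x).coeff 0 = 0 := by
  show ((x - sgl 0 (x.coeff 0) : MonoidAlgebra ℤ E)).coeff 0 = 0
  rw [MonoidAlgebra.coeff_sub, Finsupp.sub_apply, sgl_apply_self, sub_self]

/-- `ℤ[E^×]`, realized as the additive subgroup of the semigroup algebra
`ℤ[E]` consisting of the elements whose coefficient at `0` vanishes; it is the free
`ℤ`-module with basis `E^× = E \ {0}`. -/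
noncomputable def ZS (E : Type) [SemilatticeWithZero E] : AddSubgroup (MonoidAlgebra ℤ E) where
  carrier := {x | x.coeff 0 = 0}
  zero_mem' := rfl
  add_mem' := by
    intro a b ha hb
    simp only [Set.mem_setOf_eq] at *
    rw [MonoidAlgebra.coeff_add, Finsupp.add_apply, ha, hb, add_zero]
  neg_mem' := by
    intro a ha
    simp only [Set.mem_setOf_eq] at *
    rw [MonoidAlgebra.coeff_neg, Finsupp.neg_apply, ha, neg_zero]

/-- The integral semigroup ring `ℤ[E^×]`. -/
abbrev ZE (E : Type) [SemilatticeWithZero E] : Type := ↥(ZS E)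

lemma mem_ZS {x : MonoidAlgebra ℤ E} : x ∈ ZS E ↔ x.coeff 0 = 0 := Iff.rfl

lemma T_eq_self {x : MonoidAlgebra ℤ E} (h : x.coeff 0 = 0) : T x = x := by
  simp [T, h, sgl]

lemma T_add (a b : MonoidAlgebra ℤ E) : T (a + b) = T a + T b := by
  unfold T
  rw [show ((a + b).coeff 0) = a.coeff 0 + b.coeff 0 from Finsupp.add_apply a.coeff b.coeff 0, sgl_add]
  abel

lemma T_sub_sgl (x : MonoidAlgebra ℤ E) (m : ℤ) : T (x - sgl 0 m) = T x := by
  unfold T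
  have h : ((x - sgl 0 m : MonoidAlgebra ℤ E)).coeff 0 = x.coeff 0 - m := by
    rw [MonoidAlgebra.coeff_sub, Finsupp.sub_apply, sgl_apply_self]
  rw [h, sgl_sub]
  abel

lemma single_zero_mul (c : ℤ) (b : MonoidAlgebra ℤ E) :
    (sgl 0 c) * b = sgl 0 (((sgl 0 c * b : MonoidAlgebra ℤ E)).coeff 0) := by
  classical
  ext d
  by_cases hd : d = 0
  · subst hd; rw [sgl_apply_self]
  · rw [sgl_apply_ne 0 d _ (Ne.symm hd)]
    by_contra h
    have hmem : d ∈ ((sgl (0:E) c) * b).coeff.support := Finsupp.mem_support_iff.mpr h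
    have h2 := MonoidAlgebra.support_coeff_mul_subset (sgl (0:E) c) b hmem
    rw [Finset.mem_mul] at h2
    obtain ⟨a, ha, b', _, hab⟩ := h2
    have ha' : a = 0 := by
      have := Finsupp.support_single_subset (ha : a ∈ (Finsupp.single (0:E) c).support)
      simpa using this
    exact hd (by rw [← hab, ha', SemilatticeWithZero.zero_mul])

lemma T_mul_left (a b : MonoidAlgebra ℤ E) : T (T a * b) = T (a * b) := by
  have h1 : T a * b = a * b - (sgl 0 (a.coeff 0)) * b := by rw [T, sub_mul]
  rw [h1, single_zero_mul, T_sub_sgl]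

lemma T_mul_right (a b : MonoidAlgebra ℤ E) : T (a * T b) = T (a * b) := by
  rw [mul_comm a (T b), T_mul_left, mul_comm]

noncomputable instance : Mul (ZE E) :=
  ⟨fun x y => ⟨T (x.1 * y.1), T_apply_zero _⟩⟩

lemma ZE.val_mul (x y : ZE E) : (x * y).1 = T (x.1 * y.1) := rfl

noncomputable instance : NonUnitalCommRing (ZE E) :=
  { (inferInstance : AddCommGroup (ZE E)) with
    mul := (· * ·)
    left_distrib := by
      intro x y z
      apply Subtype.ext
      show T (x.1 * (y.1 + z.1)) = T (x.1 * y.1) + T (x.1 * z.1)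
      rw [mul_add, T_add]
    right_distrib := by
      intro x y z
      apply Subtype.ext
      show T ((x.1 + y.1) * z.1) = T (x.1 * z.1) + T (y.1 * z.1)
      rw [add_mul, T_add]
    zero_mul := by
      intro x
      apply Subtype.ext
      show T ((0 : MonoidAlgebra ℤ E) * x.1) = 0
      rw [zero_mul]
      simp [T, sgl]
    mul_zero := by
      intro x
      apply Subtype.ext
      show T (x.1 * (0 : MonoidAlgebra ℤ E)) = 0
      rw [mul_zero]
      simp [T, sgl]
    mul_assoc := by
      intro x y z
      apply Subtype.ext
      show T (T (x.1 * y.1) * z.1) = T (x.1 * T (y.1 * z.1))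
      rw [T_mul_left, T_mul_right, mul_assoc]
    mul_comm := by
      intro x y
      apply Subtype.ext
      show T (x.1 * y.1) = T (y.1 * x.1)
      rw [mul_comm] }

/-- The canonical image of `e ∈ E` in `ℤ[E^×]`: the basis element `e` if `e ≠ 0`,
and `0` if `e = 0`. -/
noncomputable def elt (e : E) : ZE E := ⟨T (sgl e 1), T_apply_zero _⟩

/-- Product of a (nonempty) finite family in a commutative non-unital ring, computed inside
the unitization.  For a nonempty index set this is the iterated product. -/
noncomputable def nprod {ι A : Type} [NonUnitalCommRing A] (s : Finset ι) (f : ι → A) : A :=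
  (∏ j ∈ s, (Unitization.inr (f j) : Unitization ℤ A)).snd

/-- The join `⋁_{j ∈ J} x_j = ∑_{∅ ≠ J' ⊆ J} (-1)^{|J'|+1} ∏_{j ∈ J'} x_j`
of a finite family of idempotents of a commutative non-unital ring. -/
noncomputable def rjoin {ι A : Type} [NonUnitalCommRing A] (s : Finset ι) (f : ι → A) : A :=
  ∑ t ∈ s.powerset.filter (fun t => t.Nonempty), ((-1 : ℤ) ^ (t.card + 1)) • nprod t f

/-- The join `⋁_{j ∈ J} e_j ∈ ℤ[E^×]` of a finite family of elements of `E`: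
`∑_{∅ ≠ J' ⊆ J} (-1)^{|J'|+1} ∏_{j ∈ J'} e_j`, where a product whose value in `E`
is `0` contributes `0`. -/
noncomputable def join {ι : Type} (s : Finset ι) (e : ι → E) : ZE E :=
  rjoin s (fun j => elt (e j))

/-- Iterated product of a nonempty list in a semigroup with zero (the value on the
empty list is the junk value `0`). -/
def listProd : List E → E
  | [] => 0
  | [a] => a
  | a :: b :: l => a * listProd (b :: l)

/-- The product `∏_{j ∈ s} f j ∈ E` of a (nonempty) finite family. -/
noncomputable def eprod {ι : Type} (s : Finset ι) (f : ι → E) : E :=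
  listProd (s.toList.map f)

/-- The support `E(x)` of `x ∈ ℤ[E^×]`: the finite set of elements of `E^×` appearing
with a nonzero coefficient in the reduced form of `x`. -/
noncomputable def supp (x : ZE E) : Finset E := x.1.coeff.support

section Action

variable {Γ : Type} [Group Γ] [MulAction Γ E]

/-- The induced action of `g ∈ Γ` on `ℤ[E^×]`: the `ℤ`-linear map sending a basis
element `e ∈ E^×` to `g • e`.  (When the action fixes `0` — which is the case for an
action by semigroup automorphisms fixing `0` — the truncation `T` is a no-op, and this
is the automorphism of `ℤ[E^×]` induced by `τ_g`.) -/
noncomputable def act (g : Γ) (x : ZE E) : ZE E :=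
  ⟨T (MonoidAlgebra.mapDomain (fun e : E => g • e) x.1), T_apply_zero _⟩

end Action



attribute [local instance] Classical.propDecidable

variable {E : Type} [SemilatticeWithZero E]

/-- A Γ-semilattice structure: the group acts by semigroup automorphisms fixing `0`. -/
def IsGammaSL (Γ E : Type) [Group Γ] [SemilatticeWithZero E] [MulAction Γ E] : Prop :=
  (∀ (g : Γ) (x y : E), g • (x * y) = (g • x) * (g • y)) ∧ (∀ g : Γ, g • (0 : E) = 0)

/-- The set `E_φ`. -/
def Ephi {D : Type} [NonUnitalCommRing D] (φ : ZE E →ₙ+* D) : Set (ZE E) :=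
  { x | ∃ (e : E) (J : Finset E), e ≠ 0 ∧ (∀ f ∈ J, f ≠ 0 ∧ f * e = f ∧ f ≠ e) ∧
      x = elt e - join J (fun f => f) ∧
      φ (elt e) = rjoin J (fun f => φ (elt f)) }

/-- `R` is a finite cover for `e ∈ E^×`. -/
def IsCover (e : E) (R : Finset E) : Prop :=
  (∀ f ∈ R, f ≠ 0 ∧ f * e = f) ∧
  ∀ f' : E, f' ≠ 0 → f' * e = f' → ∃ f ∈ R, f' * f ≠ 0

/-- `ℛ` is a collection of finite covers for `E`. -/
def CovSystem (ℛ : E → Set (Finset E)) : Prop :=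
  ∀ e : E, e ≠ 0 → ∀ R ∈ ℛ e, IsCover e R

/-- Condition (i). -/
def CondI (ℛ : E → Set (Finset E)) : Prop :=
  ∀ d e : E, d ≠ 0 → e ≠ 0 → d * e ≠ 0 → ∀ R ∈ ℛ e,
    d * e ∈ (R.image (fun f => d * f)).erase 0 ∨ (R.image (fun f => d * f)).erase 0 ∈ ℛ (d * e)

/-- Condition (ii). -/
def CondII (ℛ : E → Set (Finset E)) : Prop :=
  ∀ e : E, e ≠ 0 → ∀ r : ℕ, 0 < r → ∀ Rs : Fin r → Finset E,
    Function.Injective Rs → (∀ i, Rs i ∈ ℛ e) → ∀ ε : Fin r → E,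
    (∀ i, ε i ∈ supp (join (Rs i) (fun f => f))) → ∀ j : Fin r,
      (if r = 1 then e else eprod (Finset.univ.erase j) ε) ≠ 0 →
      eprod Finset.univ ε * (if r = 1 then e else eprod (Finset.univ.erase j) ε)
          = eprod Finset.univ ε ∧
      eprod Finset.univ ε ≠ (if r = 1 then e else eprod (Finset.univ.erase j) ε)

/-- Condition (iii). -/
def CondIII (Γ : Type) [Group Γ] [MulAction Γ E] (ℛ : E → Set (Finset E)) : Prop :=
  ∀ (g : Γ) (e : E), e ≠ 0 →
    (fun R : Finset E => R.image (fun f => g • f)) '' (ℛ e) = ℛ (g • e)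

/-- `e(𝒮) = ∏_{R ∈ 𝒮} (e - ⋁R) ∈ ℤ[E^×]`. -/
noncomputable def eS (e : E) (S : Finset (Finset E)) : ZE E :=
  nprod S (fun R => elt e - join R (fun f => f))

/-- `E(E,ℛ) = {e(𝒮) : e ∈ E^×, 𝒮 ⊆ ℛ(e) nonempty finite} ∪ {0} ⊆ ℤ[E^×]`. -/
def EER (ℛ : E → Set (Finset E)) : Set (ZE E) :=
  {x | ∃ (e : E) (S : Finset (Finset E)), e ≠ 0 ∧ S.Nonempty ∧ ↑S ⊆ ℛ e ∧ x = eS e S} ∪ {0}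

/-- `R(𝒮,R̃) = {e(𝒮 ∪ {R̃})} ∪ {f ⬝ e(𝒮) : f ∈ R̃, f ⬝ e(𝒮) ≠ 0}`. -/
noncomputable def RSR (e : E) (S : Finset (Finset E)) (Rt : Finset E) : Finset (ZE E) :=
  insert (eS e (insert Rt S)) ((Rt.image (fun f => elt f * eS e S)).erase 0)

/-- The collection of finite covers `ℛ(E,ℛ)` on `E(E,ℛ)`, assigning to an element
`x = e(𝒮)` of `E(E,ℛ)^×` the covers `R(𝒮,R̃)`, `R̃ ∈ ℛ(e) ∖ 𝒮` (over all ways of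
presenting `x` in the form `e(𝒮)`). -/
def RER (ℛ : E → Set (Finset E)) (x : ZE E) : Set (Finset (ZE E)) :=
  {C | ∃ (e : E) (S : Finset (Finset E)) (Rt : Finset E),
        e ≠ 0 ∧ S.Nonempty ∧ ↑S ⊆ ℛ e ∧ Rt ∈ ℛ e ∧ Rt ∉ S ∧ x = eS e S ∧ C = RSR e S Rt}

/-- The `ℤ`-linear map `ℤ[E₁^×] → ℤ[E₂^×]` induced by a map `θ` from `E₁` to `ℤ[E₂^×]`,
sending a basis element `e' ∈ E₁^×` to `θ e'`. -/
noncomputable def indMap {E₁ E₂ : Type} [SemilatticeWithZero E₁] [SemilatticeWithZero E₂]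
    (θ : E₁ → ZE E₂) : ZE E₁ →ₗ[ℤ] ZE E₂ :=
  (Finsupp.linearCombination ℤ θ).comp
    ((MonoidAlgebra.coeffLinearEquiv ℤ).toLinearMap.comp (ZS E₁).subtype.toIntLinearMap)

/-- `(E₁, ℛ₁, θ)` is a realization of the construction `(E(E,ℛ), ℛ(E,ℛ))`:
`θ` identifies the abstract Γ-semilattice `E₁` with `E(E,ℛ) ⊆ ℤ[E^×]` (equivariantly,
multiplicatively and preserving `0`), and `ℛ₁` corresponds to `ℛ(E,ℛ)` under this
identification. -/
def Realizes {Γ E E₁ : Type} [Group Γ] [SemilatticeWithZero E] [MulAction Γ E]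
    [SemilatticeWithZero E₁] [MulAction Γ E₁]
    (ℛ : E → Set (Finset E)) (ℛ₁ : E₁ → Set (Finset E₁)) (θ : E₁ → ZE E) : Prop :=
  Function.Injective θ ∧ Set.range θ = EER ℛ ∧ θ 0 = 0 ∧
  (∀ x y : E₁, θ (x * y) = θ x * θ y) ∧
  (∀ (g : Γ) (x : E₁), θ (g • x) = act g (θ x)) ∧
  (∀ e' : E₁, e' ≠ 0 → ∀ C : Finset E₁, C ∈ ℛ₁ e' ↔ C.image θ ∈ RER ℛ (θ e'))

end IndRes

open IndRes

section AuxLemmas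

open Unitization IndRes

attribute [local instance] Classical.propDecidable

variable {A B : Type} [NonUnitalCommRing A] [NonUnitalCommRing B]

lemma aux_fst_prod {ι : Type} {t : Finset ι} (ht : t.Nonempty) (f : ι → A) :
    (∏ j ∈ t, (inr (f j) : Unitization ℤ A)).fst = 0 := by
  classical
  obtain ⟨a, ha⟩ := ht
  rw [← Finset.mul_prod_erase t _ ha, Unitization.fst_mul, Unitization.fst_inr, zero_mul]

lemma aux_inr_nprod {ι : Type} {t : Finset ι} (ht : t.Nonempty) (f : ι → A) :
    (inr (nprod t f) : Unitization ℤ A) = ∏ j ∈ t, inr (f j) := by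
  have h := Unitization.inl_fst_add_inr_snd_eq (∏ j ∈ t, (inr (f j) : Unitization ℤ A))
  rw [aux_fst_prod ht, Unitization.inl_zero, zero_add] at h
  exact h

lemma aux_nprod_cons {ι : Type} (a : ι) {t : Finset ι} (hat : a ∉ t) (ht : t.Nonempty)
    (f : ι → A) : nprod (Finset.cons a t hat) f = f a * nprod t f := by
  apply Unitization.inr_injective (R := ℤ)
  rw [Unitization.inr_mul, aux_inr_nprod (Finset.cons_nonempty hat) f, aux_inr_nprod ht f,
    Finset.prod_cons]

lemma aux_nprod_singleton {ι : Type} (a : ι) (f : ι → A) : nprod {a} f = f a := by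
  simp [nprod]

lemma aux_map_nprod {ι : Type} (φ : A →ₙ+* B) {t : Finset ι} (ht : t.Nonempty) (f : ι → A) :
    φ (nprod t f) = nprod t (fun j => φ (f j)) := by
  induction ht using Finset.Nonempty.cons_induction with
  | singleton a => rw [aux_nprod_singleton, aux_nprod_singleton]
  | cons a s h hs ih => rw [aux_nprod_cons a h hs, aux_nprod_cons a h hs, map_mul, ih]

lemma aux_map_rjoin {ι : Type} (φ : A →ₙ+* B) (s : Finset ι) (f : ι → A) :
    φ (rjoin s f) = rjoin s (fun j => φ (f j)) := by
  unfold rjoin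
  rw [map_sum]
  refine Finset.sum_congr rfl fun t ht => ?_
  rw [map_zsmul, aux_map_nprod φ (Finset.mem_filter.mp ht).2 f]

lemma aux_prod_one_sub {ι : Type} (s : Finset ι) (u : ι → Unitization ℤ A) :
    ∏ j ∈ s, (1 - u j)
      = ∑ t ∈ s.powerset, (-1 : Unitization ℤ A) ^ t.card * ∏ j ∈ t, u j := by
  classical
  have h1 : ∀ j ∈ s, (1 - u j) = (-u j) + 1 := fun j _ => by ring
  rw [Finset.prod_congr rfl h1, Finset.prod_add (R := Unitization ℤ A)]
  refine Finset.sum_congr rfl fun t _ => ?_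
  rw [Finset.prod_const_one, mul_one]
  calc ∏ j ∈ t, -u j = ∏ j ∈ t, ((-1 : Unitization ℤ A) * u j) := by
        refine Finset.prod_congr rfl fun j _ => by ring
    _ = (∏ _j ∈ t, (-1 : Unitization ℤ A)) * ∏ j ∈ t, u j := Finset.prod_mul_distrib
    _ = (-1 : Unitization ℤ A) ^ t.card * ∏ j ∈ t, u j := by rw [Finset.prod_const]

lemma aux_inr_rjoin {ι : Type} (s : Finset ι) (f : ι → A) :
    (inr (rjoin s f) : Unitization ℤ A) = 1 - ∏ j ∈ s, (1 - inr (f j)) := by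
  classical
  have hL : (inr (rjoin s f) : Unitization ℤ A)
      = ∑ t ∈ s.powerset.filter (fun t => t.Nonempty),
          (-1 : Unitization ℤ A) ^ (t.card + 1) * ∏ j ∈ t, inr (f j) := by
    show (Unitization.inrHom ℤ ℤ A) (rjoin s f) = _
    unfold rjoin
    rw [map_sum]
    refine Finset.sum_congr rfl fun t ht => ?_
    rw [map_zsmul]
    show ((-1 : ℤ) ^ (t.card + 1)) • (inr (nprod t f) : Unitization ℤ A) = _
    rw [aux_inr_nprod (Finset.mem_filter.mp ht).2 f, zsmul_eq_mul]
    push_cast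
    simp only [Int.cast_neg (R := Unitization ℤ A), Int.cast_pow (R := Unitization ℤ A),
      Int.cast_one (R := Unitization ℤ A)]
  have hsplit := Finset.sum_filter_add_sum_filter_not s.powerset (fun t => t.Nonempty)
      (fun t => (-1 : Unitization ℤ A) ^ t.card * ∏ j ∈ t, inr (f j))
  have hempty : s.powerset.filter (fun t => ¬ t.Nonempty) = {∅} := by
    ext t
    simp only [Finset.mem_filter, Finset.mem_powerset, Finset.not_nonempty_iff_eq_empty,
      Finset.mem_singleton]
    constructor
    · rintro ⟨-, h⟩; exact h
    · rintro rfl; exact ⟨Finset.empty_subset s, rfl⟩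
  rw [hL, aux_prod_one_sub, ← hsplit, hempty, Finset.sum_singleton]
  simp only [Finset.card_empty, pow_zero, Finset.prod_empty, mul_one]
  have h2 : ∀ t ∈ s.powerset.filter (fun t => t.Nonempty),
      (-1 : Unitization ℤ A) ^ (t.card + 1) * ∏ j ∈ t, inr (f j)
        = -((-1 : Unitization ℤ A) ^ t.card * ∏ j ∈ t, inr (f j)) := fun t _ => by
    rw [pow_succ]; ring
  rw [Finset.sum_congr rfl h2, Finset.sum_neg_distrib]
  ring

variable {U : Type} [CommRing U]

lemma aux_sub_one_mul_prod {ι : Type} (s : Finset ι) (u : U) (v : ι → U)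
    (h : ∀ j ∈ s, u * v j = v j) : (u - 1) * ∏ j ∈ s, (1 - v j) = u - 1 := by
  classical
  induction s using Finset.cons_induction with
  | empty => simp
  | cons a t hat ih =>
      rw [Finset.prod_cons, ← mul_assoc]
      have h1 : (u - 1) * (1 - v a) = u - 1 := by
        have ha := h a (Finset.mem_cons_self a t)
        linear_combination -ha
      rw [h1, ih (fun j hj => h j (Finset.mem_cons_of_mem hj))]

lemma aux_mul_prod_eq_sub {ι : Type} (s : Finset ι) (u : U) (v : ι → U)
    (h : ∀ j ∈ s, u * v j = v j) :
    u * ∏ j ∈ s, (1 - v j) = u - (1 - ∏ j ∈ s, (1 - v j)) := by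
  have h1 := aux_sub_one_mul_prod s u v h
  linear_combination h1

lemma aux_mul_prod_congr {ι : Type} (s : Finset ι) (u : U) (v w : ι → U)
    (h : ∀ j ∈ s, u * v j = u * w j) :
    u * ∏ j ∈ s, (1 - v j) = u * ∏ j ∈ s, (1 - w j) := by
  classical
  induction s using Finset.cons_induction with
  | empty => rfl
  | cons a t hat ih =>
      rw [Finset.prod_cons, Finset.prod_cons]
      have ha := h a (Finset.mem_cons_self a t)
      have ih' := ih (fun j hj => h j (Finset.mem_cons_of_mem hj))
      calc u * ((1 - v a) * ∏ j ∈ t, (1 - v j))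
          = (1 - v a) * (u * ∏ j ∈ t, (1 - v j)) := by ring
        _ = (1 - v a) * (u * ∏ j ∈ t, (1 - w j)) := by rw [ih']
        _ = (1 - w a) * (u * ∏ j ∈ t, (1 - w j))
              + (u * w a - u * v a) * ∏ j ∈ t, (1 - w j) := by ring
        _ = u * ((1 - w a) * ∏ j ∈ t, (1 - w j)) := by rw [ha]; ring

lemma aux_prod_idem_sq {ι : Type} (s : Finset ι) (p : ι → U) (hp : ∀ j, p j * p j = p j) :
    (∏ j ∈ s, p j) * (∏ j ∈ s, p j) = ∏ j ∈ s, p j := by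
  rw [← Finset.prod_mul_distrib]; exact Finset.prod_congr rfl fun j _ => hp j

lemma aux_prod_idem_absorb {ι : Type} [DecidableEq ι] {r s : Finset ι} (hrs : r ⊆ s)
    (p : ι → U) (hp : ∀ j, p j * p j = p j) :
    (∏ j ∈ s, p j) * (∏ j ∈ r, p j) = ∏ j ∈ s, p j := by
  rw [← Finset.prod_sdiff hrs, mul_assoc, aux_prod_idem_sq r p hp]

lemma aux_prod_idem_union {ι : Type} [DecidableEq ι] (s t : Finset ι) (p : ι → U)
    (hp : ∀ j, p j * p j = p j) :
    (∏ j ∈ s, p j) * (∏ j ∈ t, p j) = ∏ j ∈ s ∪ t, p j := by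
  rw [← Finset.prod_union_inter]
  exact aux_prod_idem_absorb Finset.inter_subset_union p hp

lemma aux_prod_image_idem {ι κ : Type} [DecidableEq κ] (s : Finset ι) (m : ι → κ)
    (p : κ → U) (hp : ∀ j, p j * p j = p j) :
    ∏ j ∈ s, p (m j) = ∏ d ∈ s.image m, p d := by
  classical
  induction s using Finset.cons_induction with
  | empty => simp
  | cons a t hat ih =>
      rw [Finset.prod_cons, Finset.cons_eq_insert, Finset.image_insert]
      by_cases hm : m a ∈ t.image m
      · rw [Finset.insert_eq_self.mpr hm, ih, ← Finset.mul_prod_erase _ _ hm, ← mul_assoc,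
          hp (m a)]
      · rw [Finset.prod_insert hm, ih]

variable {E : Type} [SemilatticeWithZero E]

lemma aux_elt_zero : elt (0 : E) = 0 := by
  apply Subtype.ext
  show T (sgl (0 : E) 1) = 0
  unfold T
  rw [sgl_apply_self]
  exact sub_self _

lemma aux_elt_mul (a b : E) : elt a * elt b = elt (a * b) := by
  apply Subtype.ext
  show T (T (sgl a 1) * T (sgl b 1)) = T (sgl (a * b) 1)
  rw [T_mul_left, T_mul_right]
  congr 1
  show (MonoidAlgebra.single a (1 : ℤ)) * MonoidAlgebra.single b 1
      = MonoidAlgebra.single (a * b) 1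
  rw [MonoidAlgebra.single_mul_single, one_mul]

lemma aux_elt_idem (a : E) : elt a * elt a = elt a := by
  rw [aux_elt_mul, SemilatticeWithZero.mul_idem]

lemma aux_inr_elt_idem (a : E) :
    (inr (elt a) : Unitization ℤ (ZE E)) * inr (elt a) = inr (elt a) := by
  rw [← Unitization.inr_mul, aux_elt_idem]

lemma aux_one_sub_elt_idem (a : E) :
    (1 - (inr (elt a) : Unitization ℤ (ZE E))) * (1 - inr (elt a)) = 1 - inr (elt a) := by
  have h := aux_inr_elt_idem a
  linear_combination h

lemma aux_inr_sub_join (c : E) (K : Finset E) (hK : ∀ d ∈ K, d * c = d) :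
    (inr ((elt c - join K (fun f => f)) : ZE E) : Unitization ℤ (ZE E))
      = inr (elt c) * ∏ d ∈ K, (1 - inr (elt d)) := by
  rw [Unitization.inr_sub]
  have hj : (inr (join K (fun f => f) : ZE E) : Unitization ℤ (ZE E))
      = 1 - ∏ d ∈ K, (1 - inr (elt d)) := aux_inr_rjoin K (fun d => elt d)
  rw [hj]
  exact (aux_mul_prod_eq_sub (U := Unitization ℤ (ZE E)) K (inr (elt c)) (fun d => inr (elt d))
    (fun d hd => by rw [← Unitization.inr_mul, aux_elt_mul, mul_comm c d, hK d hd])).symm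

end AuxLemmas

set_option maxHeartbeats 1600000 in
open Unitization in
theorem statement_2 {E D : Type} [SemilatticeWithZero E] [NonUnitalCommRing D]
    (hD : NonUnitalAlgebra.adjoin ℤ {d : D | d * d = d} = ⊤)
    (φ : ZE E →ₙ+* D) :
    ∀ x ∈ Ephi φ, ∀ y ∈ Ephi φ, x * y ∈ Ephi φ ∪ {0} := by
  classical
  rintro x ⟨e, J, he, hJ, hxval, hφx⟩ y ⟨e', J', he', hJ', hyval, hφy⟩
  simp only [Set.mem_union, Set.mem_singleton_iff]
  -- semilattice computations
  have key1 : ∀ f : E, f * e = f → (f * e') * (e * e') = f * e' := fun f hf => by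
    rw [mul_mul_mul_comm, hf, SemilatticeWithZero.mul_idem]
  have key2 : ∀ g : E, g * e' = g → (e * g) * (e * e') = e * g := fun g hg => by
    rw [mul_mul_mul_comm, SemilatticeWithZero.mul_idem, hg]
  have key3 : ∀ f : E, f * e = f → (e * e') * f = (e * e') * (f * e') := fun f hf => by
    rw [mul_comm (e * e') f, ← mul_assoc, hf, mul_comm (e * e') (f * e'), key1 f hf]
  have key4 : ∀ g : E, g * e' = g → (e * e') * g = (e * e') * (e * g) := fun g hg => by
    rw [mul_assoc, mul_comm e' g, hg, mul_comm (e * e') (e * g), key2 g hg]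
  set K : Finset E :=
    ((J.image (fun f => f * e')) ∪ (J'.image (fun g => e * g))).erase 0 with hKdef
  have hKc : ∀ d ∈ K, d * (e * e') = d := by
    intro d hd
    have hd' := Finset.mem_of_mem_erase hd
    rw [Finset.mem_union] at hd'
    rcases hd' with h | h
    · obtain ⟨f, hf, rfl⟩ := Finset.mem_image.mp h
      exact key1 f ((hJ f hf).2.1)
    · obtain ⟨g, hg, rfl⟩ := Finset.mem_image.mp h
      exact key2 g ((hJ' g hg).2.1)
  have hx : (inr (x : ZE E) : Unitization ℤ (ZE E))
      = inr (elt e) * ∏ f ∈ J, (1 - inr (elt f)) := by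
    rw [hxval]; exact aux_inr_sub_join e J (fun f hf => (hJ f hf).2.1)
  have hy : (inr (y : ZE E) : Unitization ℤ (ZE E))
      = inr (elt e') * ∏ g ∈ J', (1 - inr (elt g)) := by
    rw [hyval]; exact aux_inr_sub_join e' J' (fun g hg => (hJ' g hg).2.1)
  have s1 : (inr (elt (e * e')) : Unitization ℤ (ZE E)) * ∏ f ∈ J, (1 - inr (elt f))
      = inr (elt (e * e')) * ∏ f ∈ J, (1 - inr (elt (f * e'))) := by
    refine aux_mul_prod_congr (U := Unitization ℤ (ZE E)) J _ _ _ (fun f hf => ?_)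
    rw [← Unitization.inr_mul, ← Unitization.inr_mul, aux_elt_mul, aux_elt_mul,
      key3 f ((hJ f hf).2.1)]
  have s2 : (inr (elt (e * e')) : Unitization ℤ (ZE E)) * ∏ g ∈ J', (1 - inr (elt g))
      = inr (elt (e * e')) * ∏ g ∈ J', (1 - inr (elt (e * g))) := by
    refine aux_mul_prod_congr (U := Unitization ℤ (ZE E)) J' _ _ _ (fun g hg => ?_)
    rw [← Unitization.inr_mul, ← Unitization.inr_mul, aux_elt_mul, aux_elt_mul,
      key4 g ((hJ' g hg).2.1)]
  have s3 : ∏ f ∈ J, (1 - (inr (elt (f * e')) : Unitization ℤ (ZE E)))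
      = ∏ d ∈ J.image (fun f => f * e'), (1 - inr (elt d)) :=
    aux_prod_image_idem J (fun f => f * e')
      (fun d => 1 - (inr (elt d) : Unitization ℤ (ZE E))) (fun d => aux_one_sub_elt_idem d)
  have s4 : ∏ g ∈ J', (1 - (inr (elt (e * g)) : Unitization ℤ (ZE E)))
      = ∏ d ∈ J'.image (fun g => e * g), (1 - inr (elt d)) :=
    aux_prod_image_idem J' (fun g => e * g)
      (fun d => 1 - (inr (elt d) : Unitization ℤ (ZE E))) (fun d => aux_one_sub_elt_idem d)
  have s5 : (∏ d ∈ J.image (fun f => f * e'),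
        (1 - (inr (elt d) : Unitization ℤ (ZE E))))
      * ∏ d ∈ J'.image (fun g => e * g), (1 - inr (elt d))
      = ∏ d ∈ (J.image (fun f => f * e')) ∪ (J'.image (fun g => e * g)),
          (1 - inr (elt d)) :=
    aux_prod_idem_union (J.image (fun f => f * e')) (J'.image (fun g => e * g))
      (fun d => 1 - (inr (elt d) : Unitization ℤ (ZE E))) (fun d => aux_one_sub_elt_idem d)
  have s6 : ∏ d ∈ K, (1 - (inr (elt d) : Unitization ℤ (ZE E)))
      = ∏ d ∈ (J.image (fun f => f * e')) ∪ (J'.image (fun g => e * g)),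
          (1 - inr (elt d)) := by
    rw [hKdef]
    exact Finset.prod_erase _ (by rw [aux_elt_zero, Unitization.inr_zero, sub_zero])
  have master : (inr ((x * y : ZE E)) : Unitization ℤ (ZE E))
      = inr (elt (e * e')) * ∏ d ∈ K, (1 - inr (elt d)) := by
    have h1 : (inr (elt e) : Unitization ℤ (ZE E)) * inr (elt e') = inr (elt (e * e')) := by
      rw [← Unitization.inr_mul, aux_elt_mul]
    rw [Unitization.inr_mul, hx, hy]
    calc (inr (elt e) * ∏ f ∈ J, (1 - inr (elt f)))
          * ((inr (elt e') : Unitization ℤ (ZE E)) * ∏ g ∈ J', (1 - inr (elt g)))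
        = ((inr (elt e) * inr (elt e')) * ∏ f ∈ J, (1 - inr (elt f)))
            * ∏ g ∈ J', (1 - inr (elt g)) := by ring
      _ = (inr (elt (e * e')) * ∏ f ∈ J, (1 - inr (elt f)))
            * ∏ g ∈ J', (1 - inr (elt g)) := by rw [h1]
      _ = (inr (elt (e * e')) * ∏ f ∈ J, (1 - inr (elt (f * e'))))
            * ∏ g ∈ J', (1 - inr (elt g)) := by rw [s1]
      _ = (inr (elt (e * e')) * ∏ g ∈ J', (1 - inr (elt g)))
            * ∏ f ∈ J, (1 - inr (elt (f * e'))) := by ring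
      _ = (inr (elt (e * e')) * ∏ g ∈ J', (1 - inr (elt (e * g))))
            * ∏ f ∈ J, (1 - inr (elt (f * e'))) := by rw [s2]
      _ = inr (elt (e * e'))
            * ((∏ f ∈ J, (1 - inr (elt (f * e'))))
                * ∏ g ∈ J', (1 - inr (elt (e * g)))) := by ring
      _ = inr (elt (e * e')) * ∏ d ∈ K, (1 - inr (elt d)) := by
            rw [s3, s4, s5, s6]
  by_cases hc0 : e * e' = 0
  · right
    apply Unitization.inr_injective (R := ℤ)
    rw [master, hc0, aux_elt_zero, Unitization.inr_zero, zero_mul]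
  by_cases hcK : e * e' ∈ K
  · right
    apply Unitization.inr_injective (R := ℤ)
    rw [master, ← Finset.mul_prod_erase K _ hcK, Unitization.inr_zero]
    have hu := aux_inr_elt_idem (E := E) (e * e')
    linear_combination (-(∏ d ∈ K.erase (e * e'), (1 - (inr (elt d) : Unitization ℤ (ZE E))))) * hu
  · left
    have heq : x * y = elt (e * e') - join K (fun f => f) := by
      apply Unitization.inr_injective (R := ℤ)
      rw [master, aux_inr_sub_join (e * e') K hKc]
    have hφx0 : φ x = 0 := by
      rw [hxval, map_sub, hφx,
        show join J (fun f => f) = rjoin J (fun f => elt f) from rfl,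
        aux_map_rjoin, sub_self]
    have hφy0 : φ y = 0 := by
      rw [hyval, map_sub, hφy,
        show join J' (fun f => f) = rjoin J' (fun f => elt f) from rfl,
        aux_map_rjoin, sub_self]
    have h0 : φ (x * y) = 0 := by rw [map_mul, hφx0, zero_mul]
    rw [heq, map_sub,
      show join K (fun f => f) = rjoin K (fun f => elt f) from rfl,
      aux_map_rjoin] at h0
    refine ⟨e * e', K, hc0, ?_, heq, sub_eq_zero.mp h0⟩
    intro d hd
    exact ⟨Finset.ne_of_mem_erase hd, hKc d hd, fun h => hcK (h ▸ hd)⟩
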